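/- arXiv:2508.14777 — 3 statements merged into one kernel-verified Lean document; each statement's English description precedes it below -/
import Mathlib

section
/- The maximal non-increasing rearrangement is subadditive: for all measurable functions u, v on a set E of finite measure, (|u| + |v|)**(s) ≤ u**(s) + v**(s) for every s > 0. -/
open MeasureTheory Set
open scoped ENNReal

/-- Decreasing rearrangement of `u` restricted to `E`. -/
noncomputable def decRe {n : ℕ} (E : Set (Fin n → ℝ)) (u : (Fin n → ℝ) → ℝ) (s : ℝ) : ℝ :=
  sInf {t : ℝ | 0 ≤ t ∧ volume {x ∈ E | t < |u x|} ≤ ENNReal.ofReal s}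

/-- Maximal non-increasing rearrangement `u**(s) = s⁻¹ ∫₀^s u*`. -/
noncomputable def maxRe {n : ℕ} (E : Set (Fin n → ℝ)) (u : (Fin n → ℝ) → ℝ) (s : ℝ) : ℝ≥0∞ :=
  (ENNReal.ofReal s)⁻¹ * ∫⁻ t in Set.Ioo (0 : ℝ) s, ENNReal.ofReal (decRe E u t)

namespace SubaddAux

open Filter Topology

variable {n : ℕ}

/-- The distribution function of `u` on `E`. -/
noncomputable def dst (E : Set (Fin n → ℝ)) (u : (Fin n → ℝ) → ℝ) (τ : ℝ) : ℝ≥0∞ :=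
  volume {x ∈ E | τ < |u x|}

/-- The defining set for `decRe`. -/
def S (E : Set (Fin n → ℝ)) (u : (Fin n → ℝ) → ℝ) (t : ℝ) : Set ℝ :=
  {c : ℝ | 0 ≤ c ∧ dst E u c ≤ ENNReal.ofReal t}

lemma decRe_eq (E : Set (Fin n → ℝ)) (u : (Fin n → ℝ) → ℝ) (t : ℝ) :
    decRe E u t = sInf (S E u t) := rfl

lemma dst_antitone (E : Set (Fin n → ℝ)) (u : (Fin n → ℝ) → ℝ) : Antitone (dst E u) :=
  fun a b h => measure_mono fun x hx => ⟨hx.1, lt_of_le_of_lt h hx.2⟩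

lemma dst_meas_set {E : Set (Fin n → ℝ)} {u : (Fin n → ℝ) → ℝ} (hE : MeasurableSet E)
    (hu : Measurable u) (τ : ℝ) : MeasurableSet {x ∈ E | τ < |u x|} :=
  hE.inter (measurableSet_lt measurable_const hu.abs)

lemma dst_lt_top {E : Set (Fin n → ℝ)} (hEfin : volume E < ⊤) (u : (Fin n → ℝ) → ℝ) (τ : ℝ) :
    dst E u τ < ⊤ :=
  lt_of_le_of_lt (measure_mono (sep_subset _ _)) hEfin

lemma S_bddBelow (E : Set (Fin n → ℝ)) (u : (Fin n → ℝ) → ℝ) (t : ℝ) :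
    BddBelow (S E u t) := ⟨0, fun _ hc => hc.1⟩

lemma decRe_nonneg {E : Set (Fin n → ℝ)} {u : (Fin n → ℝ) → ℝ} {t : ℝ} :
    0 ≤ decRe E u t :=
  Real.sInf_nonneg fun _ hc => hc.1

lemma S_nonempty {E : Set (Fin n → ℝ)} {u : (Fin n → ℝ) → ℝ} (hE : MeasurableSet E)
    (hEfin : volume E < ⊤) (hu : Measurable u) {t : ℝ} (ht : 0 < t) :
    (S E u t).Nonempty := by
  have h0 : Tendsto (fun k : ℕ => volume {x ∈ E | (k : ℝ) < |u x|}) atTop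
      (𝓝 (volume (⋂ k : ℕ, {x ∈ E | (k : ℝ) < |u x|}))) := by
    apply tendsto_measure_iInter_atTop
    · exact fun k => (dst_meas_set hE hu _).nullMeasurableSet
    · intro k m hkm x hx
      exact ⟨hx.1, lt_of_le_of_lt (by exact_mod_cast Nat.cast_le.2 hkm) hx.2⟩
    · exact ⟨0, (lt_of_le_of_lt (measure_mono (sep_subset _ _)) hEfin).ne⟩
  have hempty : (⋂ k : ℕ, {x ∈ E | (k : ℝ) < |u x|}) = ∅ := by
    ext x
    simp only [mem_iInter, mem_empty_iff_false, iff_false]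
    intro h
    obtain ⟨k, hk⟩ := exists_nat_gt |u x|
    exact absurd (h k).2 (not_lt.2 hk.le)
  rw [hempty, measure_empty] at h0
  obtain ⟨k, hk⟩ := (h0.eventually_lt_const (ENNReal.ofReal_pos.2 ht)).exists
  exact ⟨(k : ℝ), Nat.cast_nonneg k, hk.le⟩

lemma decRe_mem {E : Set (Fin n → ℝ)} {u : (Fin n → ℝ) → ℝ} (hE : MeasurableSet E)
    (hEfin : volume E < ⊤) (hu : Measurable u) {t : ℝ} (ht : 0 < t) :
    decRe E u t ∈ S E u t := by
  have hne := S_nonempty hE hEfin hu ht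
  have hbdd := S_bddBelow E u t
  set a := decRe E u t with ha
  refine ⟨decRe_nonneg, ?_⟩
  have hUnion : {x ∈ E | a < |u x|} = ⋃ k : ℕ, {x ∈ E | a + 1 / ((k : ℝ) + 1) < |u x|} := by
    ext x
    constructor
    · rintro ⟨hxE, hx⟩
      obtain ⟨k, hk⟩ := exists_nat_one_div_lt (sub_pos.2 hx)
      exact mem_iUnion.2 ⟨k, hxE, by linarith⟩
    · intro h
      obtain ⟨k, hxE, hk⟩ := mem_iUnion.1 h
      refine ⟨hxE, lt_of_le_of_lt ?_ hk⟩
      have : (0 : ℝ) < 1 / ((k : ℝ) + 1) := by positivity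
      linarith
  show volume {x ∈ E | a < |u x|} ≤ ENNReal.ofReal t
  rw [hUnion]
  have hmono : Monotone fun k : ℕ => {x ∈ E | a + 1 / ((k : ℝ) + 1) < |u x|} := by
    intro k m hkm x hx
    refine ⟨hx.1, lt_of_le_of_lt ?_ hx.2⟩
    have h1 : (1 : ℝ) / ((m : ℝ) + 1) ≤ 1 / ((k : ℝ) + 1) := by
      apply one_div_le_one_div_of_le
      · positivity
      · exact_mod_cast Nat.succ_le_succ hkm
    linarith
  rw [hmono.measure_iUnion]
  refine iSup_le fun k => ?_
  have hlt : sInf (S E u t) < a + 1 / ((k : ℝ) + 1) := by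
    have h1 : sInf (S E u t) = a := (decRe_eq E u t).symm.trans ha.symm
    have h2 : (0 : ℝ) < 1 / ((k : ℝ) + 1) := by positivity
    rw [h1]; linarith
  obtain ⟨c, hcS, hc⟩ := (csInf_lt_iff hbdd hne).1 hlt
  exact le_trans (dst_antitone E u hc.le) hcS.2

lemma lt_decRe_iff {E : Set (Fin n → ℝ)} {u : (Fin n → ℝ) → ℝ} (hE : MeasurableSet E)
    (hEfin : volume E < ⊤) (hu : Measurable u) {t τ : ℝ} (ht : 0 < t) (hτ : 0 ≤ τ) :
    τ < decRe E u t ↔ ENNReal.ofReal t < dst E u τ := by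
  constructor
  · intro h
    by_contra hle
    push_neg at hle
    exact absurd (csInf_le (S_bddBelow E u t) ⟨hτ, hle⟩) (not_le.2 h)
  · intro h
    rcases lt_or_ge τ (decRe E u t) with h' | h'
    · exact h'
    · exfalso
      have hmem := decRe_mem hE hEfin hu ht
      exact absurd (le_trans (dst_antitone E u h') hmem.2) (not_le.2 h)

lemma indicator_measurable {E : Set (Fin n → ℝ)} {u : (Fin n → ℝ) → ℝ} (hE : MeasurableSet E)
    (hEfin : volume E < ⊤) (hu : Measurable u) {s : ℝ} (hs : 0 < s) :
    Measurable ((Ioo (0 : ℝ) s).indicator (decRe E u)) := by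
  apply measurable_of_Ioi
  intro c
  rcases lt_or_ge c 0 with hc | hc
  · convert MeasurableSet.univ
    ext t
    simp only [mem_preimage, mem_Ioi, mem_univ, iff_true]
    exact lt_of_lt_of_le hc (indicator_nonneg (fun t _ => decRe_nonneg) t)
  · have hset : (Ioo (0 : ℝ) s).indicator (decRe E u) ⁻¹' Ioi c =
        Ioo (0 : ℝ) s ∩ {t : ℝ | ENNReal.ofReal t < dst E u c} := by
      ext t
      simp only [mem_preimage, mem_Ioi, mem_inter_iff, mem_setOf_eq]
      constructor
      · intro h
        have htmem : t ∈ Ioo (0 : ℝ) s := by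
          by_contra hmem
          rw [indicator_of_notMem hmem] at h
          exact absurd h (not_lt.2 hc)
        rw [indicator_of_mem htmem] at h
        exact ⟨htmem, (lt_decRe_iff hE hEfin hu htmem.1 hc).1 h⟩
      · rintro ⟨htmem, h⟩
        rw [indicator_of_mem htmem]
        exact (lt_decRe_iff hE hEfin hu htmem.1 hc).2 h
    rw [hset]
    apply measurableSet_Ioo.inter
    rcases eq_or_ne (dst E u c) 0 with h0 | h0
    · convert MeasurableSet.empty
      ext t
      simp [h0]
    · have hIio : {t : ℝ | ENNReal.ofReal t < dst E u c} = Iio ((dst E u c).toReal) := by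
        ext t
        rcases le_or_gt 0 t with htt | htt
        · simp [mem_Iio, ENNReal.ofReal_lt_iff_lt_toReal htt (dst_lt_top hEfin u c).ne]
        · have h1 : (0 : ℝ) < (dst E u c).toReal :=
            ENNReal.toReal_pos h0 (dst_lt_top hEfin u c).ne
          simp only [mem_setOf_eq, mem_Iio]
          rw [ENNReal.ofReal_of_nonpos htt.le]
          exact iff_of_true (pos_iff_ne_zero.2 h0) (htt.trans h1)
      rw [hIio]
      exact measurableSet_Iio

/-- Layer-cake formula for the integral of the decreasing rearrangement. -/
lemma integral_decRe_eq {E : Set (Fin n → ℝ)} {u : (Fin n → ℝ) → ℝ} (hE : MeasurableSet E)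
    (hEfin : volume E < ⊤) (hu : Measurable u) {s : ℝ} (hs : 0 < s) :
    ∫⁻ t in Ioo (0 : ℝ) s, ENNReal.ofReal (decRe E u t) =
      ∫⁻ τ in Ioi (0 : ℝ), min (ENNReal.ofReal s) (dst E u τ) := by
  have hae : AEMeasurable (decRe E u) (volume.restrict (Ioo (0 : ℝ) s)) := by
    refine ⟨(Ioo (0 : ℝ) s).indicator (decRe E u), indicator_measurable hE hEfin hu hs, ?_⟩
    filter_upwards [ae_restrict_mem measurableSet_Ioo] with t ht
    rw [indicator_of_mem ht]
  rw [lintegral_eq_lintegral_meas_lt _ (ae_of_all _ fun _ => decRe_nonneg) hae]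
  refine setLIntegral_congr_fun measurableSet_Ioi (fun τ hτ => ?_)
  rw [Measure.restrict_apply' measurableSet_Ioo]
  have hτ0 : (0 : ℝ) ≤ τ := le_of_lt hτ
  have hfin := (dst_lt_top hEfin u τ).ne
  have hset : {t : ℝ | τ < decRe E u t} ∩ Ioo 0 s = Ioo 0 (min s (dst E u τ).toReal) := by
    ext t
    simp only [mem_inter_iff, mem_setOf_eq, mem_Ioo]
    constructor
    · rintro ⟨h1, h2, h3⟩
      have := (lt_decRe_iff hE hEfin hu h2 hτ0).1 h1
      exact ⟨h2, lt_min h3 ((ENNReal.ofReal_lt_iff_lt_toReal h2.le hfin).1 this)⟩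
    · rintro ⟨h2, hmin⟩
      refine ⟨(lt_decRe_iff hE hEfin hu h2 hτ0).2 ?_, h2, lt_of_lt_of_le hmin (min_le_left _ _)⟩
      exact (ENNReal.ofReal_lt_iff_lt_toReal h2.le hfin).2 (lt_of_lt_of_le hmin (min_le_right _ _))
  rw [hset, Real.volume_Ioo, sub_zero]
  refine le_antisymm (le_min (ENNReal.ofReal_le_ofReal (min_le_left _ _)) ?_) ?_
  · calc ENNReal.ofReal (min s (dst E u τ).toReal)
        ≤ ENNReal.ofReal (dst E u τ).toReal := ENNReal.ofReal_le_ofReal (min_le_right _ _)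
      _ = dst E u τ := ENNReal.ofReal_toReal hfin
  · rcases le_total s (dst E u τ).toReal with h | h
    · calc min (ENNReal.ofReal s) (dst E u τ) ≤ ENNReal.ofReal s := min_le_left _ _
        _ = ENNReal.ofReal (min s (dst E u τ).toReal) := by rw [min_eq_left h]
    · calc min (ENNReal.ofReal s) (dst E u τ) ≤ dst E u τ := min_le_right _ _
        _ = ENNReal.ofReal (min s (dst E u τ).toReal) := by
            rw [min_eq_right h, ENNReal.ofReal_toReal hfin]

/-- The tail integral of the distribution function equals an integral over `E`. -/
lemma tail_eq {E : Set (Fin n → ℝ)} {u : (Fin n → ℝ) → ℝ} (hE : MeasurableSet E)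
    (hu : Measurable u) {a : ℝ} (ha : 0 ≤ a) :
    ∫⁻ τ in Ioi a, dst E u τ = ∫⁻ x in E, ENNReal.ofReal (max (|u x| - a) 0) := by
  have hmeas : AEMeasurable (fun x => max (|u x| - a) 0) (volume.restrict E) :=
    ((hu.abs.sub measurable_const).max measurable_const).aemeasurable
  have hlc : (∫⁻ x in E, ENNReal.ofReal (max (|u x| - a) 0)) =
      ∫⁻ σ in Ioi (0 : ℝ), (volume.restrict E) {x : Fin n → ℝ | σ < max (|u x| - a) 0} :=
    lintegral_eq_lintegral_meas_lt _ (ae_of_all _ fun x => le_max_right _ _) hmeas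
  rw [hlc]
  have hstep : ∀ σ : ℝ, σ ∈ Ioi (0 : ℝ) →
      (volume.restrict E) {x : Fin n → ℝ | σ < max (|u x| - a) 0} = dst E u (a + σ) := by
    intro σ hσ
    rw [Measure.restrict_apply' hE]
    congr 1
    ext x
    simp only [mem_inter_iff, mem_setOf_eq, dst]
    constructor
    · rintro ⟨h1, h2⟩
      rcases lt_max_iff.1 h1 with h | h
      · exact ⟨h2, by linarith⟩
      · exact absurd hσ (by simpa using h.le)
    · rintro ⟨h1, h2⟩
      exact ⟨lt_of_lt_of_le (by linarith) (le_max_left _ _), h1⟩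
  rw [setLIntegral_congr_fun measurableSet_Ioi (fun σ hσ => hstep σ hσ)]
  -- now translate
  rw [← lintegral_indicator measurableSet_Ioi, ← lintegral_indicator measurableSet_Ioi]
  have hind : ∀ σ : ℝ, (Ioi (0 : ℝ)).indicator (fun σ => dst E u (a + σ)) σ =
      (Ioi a).indicator (dst E u) (a + σ) := by
    intro σ
    by_cases hσ : (0 : ℝ) < σ
    · rw [indicator_of_mem (mem_Ioi.2 hσ), indicator_of_mem (mem_Ioi.2 (by linarith))]
    · rw [indicator_of_notMem (fun h => hσ (mem_Ioi.1 h)),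
        indicator_of_notMem (fun h => hσ (by have := mem_Ioi.1 h; linarith))]
  exact ((lintegral_congr hind).trans
    (lintegral_add_left_eq_self ((Ioi a).indicator (dst E u)) a)).symm

/-- Lower bound: `K`-functional inequality for the rearrangement integral. -/
lemma lower_bound {E : Set (Fin n → ℝ)} {u : (Fin n → ℝ) → ℝ} (hE : MeasurableSet E)
    (hEfin : volume E < ⊤) (hu : Measurable u) {s : ℝ} (hs : 0 < s) :
    ENNReal.ofReal s * ENNReal.ofReal (decRe E u s) + ∫⁻ τ in Ioi (decRe E u s), dst E u τ ≤
      ∫⁻ τ in Ioi (0 : ℝ), min (ENNReal.ofReal s) (dst E u τ) := by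
  set a := decRe E u s with ha
  have ha0 : 0 ≤ a := decRe_nonneg
  have hmem := decRe_mem hE hEfin hu hs
  have h1 : ∫⁻ τ in Ioo (0 : ℝ) a, min (ENNReal.ofReal s) (dst E u τ) =
      ENNReal.ofReal s * ENNReal.ofReal a := by
    rw [setLIntegral_congr_fun measurableSet_Ioo
      ((fun τ hτ => min_eq_left
        (le_of_lt ((lt_decRe_iff hE hEfin hu hs hτ.1.le).1 hτ.2)))),
      setLIntegral_const, Real.volume_Ioo, sub_zero]
  have h2 : ∫⁻ τ in Ioi a, min (ENNReal.ofReal s) (dst E u τ) = ∫⁻ τ in Ioi a, dst E u τ := by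
    refine setLIntegral_congr_fun measurableSet_Ioi (fun τ hτ => ?_)
    exact min_eq_right (le_trans (dst_antitone E u hτ.le) hmem.2)
  have hdisj : Disjoint (Ioo (0 : ℝ) a) (Ioi a) :=
    disjoint_left.mpr fun x hx hx' => absurd hx.2 (not_lt.2 hx'.le)
  have h3 : ∫⁻ τ in Ioo (0 : ℝ) a ∪ Ioi a, min (ENNReal.ofReal s) (dst E u τ) =
      ENNReal.ofReal s * ENNReal.ofReal a + ∫⁻ τ in Ioi a, dst E u τ := by
    rw [lintegral_union measurableSet_Ioi hdisj, h1, h2]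
  rw [← h3]
  exact lintegral_mono_set (union_subset (fun x hx => hx.1) (Ioi_subset_Ioi ha0))

/-- Upper bound: `K`-functional inequality for the rearrangement integral. -/
lemma upper_bound (E : Set (Fin n → ℝ)) (u : (Fin n → ℝ) → ℝ) {a s : ℝ} (ha : 0 ≤ a) :
    ∫⁻ τ in Ioi (0 : ℝ), min (ENNReal.ofReal s) (dst E u τ) ≤
      ENNReal.ofReal s * ENNReal.ofReal a + ∫⁻ τ in Ioi a, dst E u τ := by
  calc ∫⁻ τ in Ioi (0 : ℝ), min (ENNReal.ofReal s) (dst E u τ)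
      = ∫⁻ τ in Ioc (0 : ℝ) a ∪ Ioi a, min (ENNReal.ofReal s) (dst E u τ) := by
        rw [Ioc_union_Ioi_eq_Ioi ha]
    _ ≤ (∫⁻ τ in Ioc (0 : ℝ) a, min (ENNReal.ofReal s) (dst E u τ)) +
        ∫⁻ τ in Ioi a, min (ENNReal.ofReal s) (dst E u τ) := lintegral_union_le _ _ _
    _ ≤ ENNReal.ofReal s * ENNReal.ofReal a + ∫⁻ τ in Ioi a, dst E u τ := by
        refine add_le_add ?_ (lintegral_mono fun τ => min_le_right _ _)
        calc ∫⁻ τ in Ioc (0 : ℝ) a, min (ENNReal.ofReal s) (dst E u τ)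
            ≤ ∫⁻ _ in Ioc (0 : ℝ) a, ENNReal.ofReal s := lintegral_mono fun τ => min_le_left _ _
          _ = ENNReal.ofReal s * ENNReal.ofReal a := by
              rw [setLIntegral_const, Real.volume_Ioc, sub_zero]

end SubaddAux

/-- Subadditivity of the maximal rearrangement: `(|u|+|v|)** ≤ u** + v**`. -/
theorem stmt1 {n : ℕ} (E : Set (Fin n → ℝ)) (hE : MeasurableSet E)
    (hEfin : volume E < ⊤) (u v : (Fin n → ℝ) → ℝ)
    (hu : Measurable u) (hv : Measurable v) :
    ∀ s : ℝ, 0 < s →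
      maxRe E (fun x => |u x| + |v x|) s ≤ maxRe E u s + maxRe E v s := by
  intro s hs
  classical
  set w : (Fin n → ℝ) → ℝ := fun x => |u x| + |v x| with hw_def
  have hw : Measurable w := hu.abs.add hv.abs
  set au := decRe E u s with hau
  set av := decRe E v s with hav
  have hau0 : 0 ≤ au := SubaddAux.decRe_nonneg
  have hav0 : 0 ≤ av := SubaddAux.decRe_nonneg
  -- the key inequality between the layer-cake integrals
  have key : ∫⁻ t in Set.Ioo (0 : ℝ) s, ENNReal.ofReal (decRe E w t) ≤
      (∫⁻ t in Set.Ioo (0 : ℝ) s, ENNReal.ofReal (decRe E u t)) +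
      ∫⁻ t in Set.Ioo (0 : ℝ) s, ENNReal.ofReal (decRe E v t) := by
    rw [SubaddAux.integral_decRe_eq hE hEfin hw hs, SubaddAux.integral_decRe_eq hE hEfin hu hs,
      SubaddAux.integral_decRe_eq hE hEfin hv hs]
    have htail : ∫⁻ τ in Set.Ioi (au + av), SubaddAux.dst E w τ ≤
        (∫⁻ τ in Set.Ioi au, SubaddAux.dst E u τ) +
        ∫⁻ τ in Set.Ioi av, SubaddAux.dst E v τ := by
      rw [SubaddAux.tail_eq hE hw (by linarith), SubaddAux.tail_eq hE hu hau0,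
        SubaddAux.tail_eq hE hv hav0]
      have hptwise : ∀ x : Fin n → ℝ,
          ENNReal.ofReal (max (|w x| - (au + av)) 0) ≤
            ENNReal.ofReal (max (|u x| - au) 0) + ENNReal.ofReal (max (|v x| - av) 0) := by
        intro x
        rw [← ENNReal.ofReal_add (le_max_right _ _) (le_max_right _ _)]
        apply ENNReal.ofReal_le_ofReal
        have hwx : |w x| = |u x| + |v x| := by
          rw [hw_def]
          exact abs_of_nonneg (add_nonneg (abs_nonneg _) (abs_nonneg _))
        rw [hwx]
        apply max_le
        · have h1 := le_max_left (|u x| - au) 0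
          have h2 := le_max_left (|v x| - av) 0
          linarith
        · exact add_nonneg (le_max_right _ _) (le_max_right _ _)
      calc ∫⁻ x in E, ENNReal.ofReal (max (|w x| - (au + av)) 0)
          ≤ ∫⁻ x in E, (ENNReal.ofReal (max (|u x| - au) 0) +
              ENNReal.ofReal (max (|v x| - av) 0)) := lintegral_mono fun x => hptwise x
        _ = (∫⁻ x in E, ENNReal.ofReal (max (|u x| - au) 0)) +
            ∫⁻ x in E, ENNReal.ofReal (max (|v x| - av) 0) :=
            lintegral_add_left ((hu.abs.sub measurable_const).max measurable_const).ennreal_ofReal _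
    calc ∫⁻ τ in Set.Ioi (0 : ℝ), min (ENNReal.ofReal s) (SubaddAux.dst E w τ)
        ≤ ENNReal.ofReal s * ENNReal.ofReal (au + av) +
          ∫⁻ τ in Set.Ioi (au + av), SubaddAux.dst E w τ :=
          SubaddAux.upper_bound E w (by linarith)
      _ ≤ ENNReal.ofReal s * ENNReal.ofReal (au + av) +
          ((∫⁻ τ in Set.Ioi au, SubaddAux.dst E u τ) +
            ∫⁻ τ in Set.Ioi av, SubaddAux.dst E v τ) := add_le_add_right htail _
      _ = (ENNReal.ofReal s * ENNReal.ofReal au + ∫⁻ τ in Set.Ioi au, SubaddAux.dst E u τ) +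
          (ENNReal.ofReal s * ENNReal.ofReal av + ∫⁻ τ in Set.Ioi av, SubaddAux.dst E v τ) := by
          rw [ENNReal.ofReal_add hau0 hav0, mul_add]
          ring
      _ ≤ (∫⁻ τ in Set.Ioi (0 : ℝ), min (ENNReal.ofReal s) (SubaddAux.dst E u τ)) +
          ∫⁻ τ in Set.Ioi (0 : ℝ), min (ENNReal.ofReal s) (SubaddAux.dst E v τ) :=
          add_le_add (SubaddAux.lower_bound hE hEfin hu hs) (SubaddAux.lower_bound hE hEfin hv hs)
  calc maxRe E w s
      = (ENNReal.ofReal s)⁻¹ * ∫⁻ t in Set.Ioo (0 : ℝ) s, ENNReal.ofReal (decRe E w t) := rfl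
    _ ≤ (ENNReal.ofReal s)⁻¹ *
        ((∫⁻ t in Set.Ioo (0 : ℝ) s, ENNReal.ofReal (decRe E u t)) +
          ∫⁻ t in Set.Ioo (0 : ℝ) s, ENNReal.ofReal (decRe E v t)) := mul_le_mul_right key _
    _ = maxRe E u s + maxRe E v s := by rw [mul_add]; rfl
end

section
/- (Hardy–Littlewood inequality) For all measurable functions u, v on a Lebesgue measurable set E ⊆ ℝⁿ of finite measure, ∫_E |u(x) v(x)| dx ≤ ∫₀^{|E|} u*(s) v*(s) ds. -/
open MeasureTheory Set
open scoped ENNReal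

lemma double_layercake {α : Type*} [MeasurableSpace α] (μ : Measure α)
    (f g : α → ℝ) (hf : Measurable f) (hg : Measurable g)
    (hf0 : ∀ x, 0 ≤ f x) (hg0 : ∀ x, 0 ≤ g x) :
    ∫⁻ x, ENNReal.ofReal (f x) * ENNReal.ofReal (g x) ∂μ
      = ∫⁻ t in Set.Ioi (0:ℝ), ∫⁻ s in Set.Ioi (0:ℝ),
          μ ({x | t < f x} ∩ {x | s < g x}) := by
  have hgm : Measurable fun x => ENNReal.ofReal (g x) := hg.ennreal_ofReal
  have hfm : Measurable fun x => ENNReal.ofReal (f x) := hf.ennreal_ofReal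
  have h1 : ∫⁻ x, ENNReal.ofReal (f x) * ENNReal.ofReal (g x) ∂μ
      = ∫⁻ x, ENNReal.ofReal (f x) ∂(μ.withDensity fun x => ENNReal.ofReal (g x)) := by
    rw [lintegral_withDensity_eq_lintegral_mul μ hgm hfm]
    exact lintegral_congr fun x => mul_comm _ _
  rw [h1, lintegral_eq_lintegral_meas_lt _ (ae_of_all _ hf0) hf.aemeasurable]
  refine setLIntegral_congr_fun measurableSet_Ioi (fun t ht => ?_)
  have hA : MeasurableSet {x | t < f x} := measurableSet_lt measurable_const hf
  rw [withDensity_apply _ hA]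
  have h2 : ∫⁻ x in {x | t < f x}, ENNReal.ofReal (g x) ∂μ
      = ∫⁻ s in Set.Ioi (0:ℝ), (μ.restrict {x | t < f x}) {a | s < g a} :=
    lintegral_eq_lintegral_meas_lt _ (ae_of_all _ hg0) hg.aemeasurable
  rw [h2]
  refine setLIntegral_congr_fun measurableSet_Ioi (fun s hs => ?_)
  rw [Measure.restrict_apply (measurableSet_lt measurable_const hg), Set.inter_comm]

lemma mu_anti {n : ℕ} (E : Set (Fin n → ℝ)) (u : (Fin n → ℝ) → ℝ) {a b : ℝ} (hab : a ≤ b) :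
    volume {x ∈ E | b < |u x|} ≤ volume {x ∈ E | a < |u x|} :=
  measure_mono fun x hx => ⟨hx.1, lt_of_le_of_lt hab hx.2⟩

lemma S_ne {n : ℕ} {E : Set (Fin n → ℝ)} (hE : MeasurableSet E) (hEfin : volume E < ⊤)
    {u : (Fin n → ℝ) → ℝ} (hu : Measurable u) {r : ℝ} (hr : 0 < r) :
    {t : ℝ | 0 ≤ t ∧ volume {x ∈ E | t < |u x|} ≤ ENNReal.ofReal r}.Nonempty := by
  set A : ℕ → Set (Fin n → ℝ) := fun k => {x ∈ E | (k : ℝ) < |u x|} with hA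
  have hmeas : ∀ k, NullMeasurableSet (A k) volume := fun k =>
    (hE.inter (measurableSet_lt measurable_const hu.abs)).nullMeasurableSet
  have hanti : Antitone A := fun j k hjk x hx =>
    ⟨hx.1, lt_of_le_of_lt (by exact_mod_cast hjk) hx.2⟩
  have hfin : ∃ k, volume (A k) ≠ ∞ :=
    ⟨0, (lt_of_le_of_lt (measure_mono fun x hx => hx.1) hEfin).ne⟩
  have hiInter : (⋂ k, A k) = ∅ := by
    ext x
    simp only [Set.mem_iInter, Set.mem_empty_iff_false, iff_false]
    intro h
    obtain ⟨k, hk⟩ := exists_nat_gt |u x|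
    exact absurd (h k).2 (not_lt.2 hk.le)
  have htend := tendsto_measure_iInter_atTop hmeas hanti hfin
  rw [hiInter, measure_empty] at htend
  obtain ⟨k, hk⟩ := (htend.eventually_lt_const (ENNReal.ofReal_pos.2 hr)).exists
  exact ⟨(k : ℝ), Nat.cast_nonneg k, hk.le⟩

lemma decRe_nonneg {n : ℕ} (E : Set (Fin n → ℝ)) (u : (Fin n → ℝ) → ℝ) (r : ℝ) :
    0 ≤ decRe E u r :=
  Real.sInf_nonneg fun _ hx => hx.1

lemma decRe_antitoneOn {n : ℕ} {E : Set (Fin n → ℝ)} (hE : MeasurableSet E)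
    (hEfin : volume E < ⊤) {u : (Fin n → ℝ) → ℝ} (hu : Measurable u) :
    AntitoneOn (decRe E u) (Set.Ioi 0) := by
  intro a ha b hb hab
  exact csInf_le_csInf ⟨0, fun x hx => hx.1⟩ (S_ne hE hEfin hu ha)
    (fun x hx => ⟨hx.1, le_trans hx.2 (ENNReal.ofReal_le_ofReal hab)⟩)

lemma decRe_lt_iff {n : ℕ} {E : Set (Fin n → ℝ)} (hE : MeasurableSet E)
    (hEfin : volume E < ⊤) {u : (Fin n → ℝ) → ℝ} (hu : Measurable u)
    {r t : ℝ} (hr : 0 < r) (ht : 0 < t) :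
    t < decRe E u r ↔ ENNReal.ofReal r < volume {x ∈ E | t < |u x|} := by
  set S := {t' : ℝ | 0 ≤ t' ∧ volume {x ∈ E | t' < |u x|} ≤ ENNReal.ofReal r} with hS
  have hSne : S.Nonempty := S_ne hE hEfin hu hr
  have hSbdd : BddBelow S := ⟨0, fun x hx => hx.1⟩
  have hdec : decRe E u r = sInf S := rfl
  constructor
  · intro h
    by_contra hc
    push_neg at hc
    rw [hdec] at h
    exact absurd (csInf_le hSbdd ⟨ht.le, hc⟩) (not_le.2 h)
  · intro h
    have hsup : volume {x ∈ E | t < |u x|}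
        = ⨆ k : ℕ, volume {x ∈ E | t + 1 / ((k : ℝ) + 1) < |u x|} := by
      have hdir : Directed (· ⊆ ·)
          (fun k : ℕ => {x ∈ E | t + 1 / ((k : ℝ) + 1) < |u x|}) := by
        apply Monotone.directed_le
        intro j k hjk x hx
        refine ⟨hx.1, lt_of_le_of_lt (add_le_add_right ?_ t) hx.2⟩
        apply one_div_le_one_div_of_le (by positivity)
        exact_mod_cast add_le_add_left (Nat.cast_le.2 hjk) 1
      rw [← Directed.measure_iUnion hdir]
      congr 1
      ext x
      simp only [Set.mem_iUnion, Set.mem_setOf_eq]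
      constructor
      · rintro ⟨hxE, hx⟩
        obtain ⟨k, hk⟩ := exists_nat_one_div_lt (sub_pos.2 hx)
        exact ⟨k, hxE, by linarith⟩
      · rintro ⟨k, hxE, hx⟩
        exact ⟨hxE, lt_of_le_of_lt (le_add_of_nonneg_right (by positivity)) hx⟩
    rw [hsup] at h
    obtain ⟨k, hk⟩ := lt_iSup_iff.mp h
    have htt' : t < t + 1 / ((k : ℝ) + 1) := lt_add_of_pos_right t (by positivity)
    have hlow : ∀ a ∈ S, t + 1 / ((k : ℝ) + 1) ≤ a := by
      intro a ha
      by_contra hc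
      push_neg at hc
      exact absurd (le_trans (mu_anti E u hc.le) ha.2) (not_le.2 hk)
    rw [hdec]
    exact lt_of_lt_of_le htt' (le_csInf hSne hlow)

lemma meas_aux {D : ℝ → ℝ} (hD : AntitoneOn D (Set.Ioi 0)) :
    Measurable fun r => if 0 < r then D r else 0 := by
  apply measurable_of_Iio
  intro a
  have hset : MeasurableSet {r : ℝ | 0 < r ∧ D r < a} := by
    have hoc : OrdConnected {r : ℝ | 0 < r ∧ D r < a} := by
      constructor
      rintro x ⟨hx0, hxa⟩ y ⟨hy0, _⟩ z hz
      have hz0 : (0 : ℝ) < z := lt_of_lt_of_le hx0 hz.1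
      exact ⟨hz0, lt_of_le_of_lt (hD hx0 hz0 hz.1) hxa⟩
    exact hoc.measurableSet
  by_cases ha : 0 < a
  · have heq : (fun r => if 0 < r then D r else 0) ⁻¹' Set.Iio a
        = {r : ℝ | 0 < r ∧ D r < a} ∪ Set.Iic 0 := by
      ext r
      by_cases hr : 0 < r <;>
        simp [Set.mem_Iio, hr, ha, not_lt.1, le_of_not_gt]
    rw [heq]
    exact hset.union measurableSet_Iic
  · have heq : (fun r => if 0 < r then D r else 0) ⁻¹' Set.Iio a
        = {r : ℝ | 0 < r ∧ D r < a} := by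
      ext r
      by_cases hr : 0 < r <;> simp [Set.mem_Iio, hr, ha]
    rw [heq]
    exact hset

/-- Hardy–Littlewood inequality: `∫_E |u v| ≤ ∫₀^{|E|} u* v*`. -/
theorem stmt2 {n : ℕ} (E : Set (Fin n → ℝ)) (hE : MeasurableSet E)
    (hEfin : volume E < ⊤) (u v : (Fin n → ℝ) → ℝ)
    (hu : Measurable u) (hv : Measurable v) :
    ∫⁻ x in E, ENNReal.ofReal |u x * v x| ≤
      ∫⁻ s in Set.Ioo (0 : ℝ) (volume E).toReal,
        ENNReal.ofReal (decRe E u s * decRe E v s) := by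
  set T := (volume E).toReal with hT
  have hL : ∫⁻ x in E, ENNReal.ofReal |u x * v x|
      = ∫⁻ t in Set.Ioi (0:ℝ), ∫⁻ s in Set.Ioi (0:ℝ),
          (volume.restrict E) ({x | t < |u x|} ∩ {x | s < |v x|}) := by
    rw [← double_layercake (volume.restrict E) (fun x => |u x|) (fun x => |v x|)
      hu.abs hv.abs (fun x => abs_nonneg _) (fun x => abs_nonneg _)]
    apply lintegral_congr
    intro x
    rw [abs_mul, ENNReal.ofReal_mul (abs_nonneg _)]
  set fu : ℝ → ℝ := fun r => if 0 < r then decRe E u r else 0 with hfu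
  set fv : ℝ → ℝ := fun r => if 0 < r then decRe E v r else 0 with hfv
  have hfum : Measurable fu := meas_aux (decRe_antitoneOn hE hEfin hu)
  have hfvm : Measurable fv := meas_aux (decRe_antitoneOn hE hEfin hv)
  have hfu0 : ∀ r, 0 ≤ fu r := by
    intro r
    by_cases h : 0 < r <;> simp [hfu, h, decRe_nonneg]
  have hfv0 : ∀ r, 0 ≤ fv r := by
    intro r
    by_cases h : 0 < r <;> simp [hfv, h, decRe_nonneg]
  have hR : ∫⁻ s in Set.Ioo (0:ℝ) T, ENNReal.ofReal (decRe E u s * decRe E v s)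
      = ∫⁻ t in Set.Ioi (0:ℝ), ∫⁻ s in Set.Ioi (0:ℝ),
          (volume.restrict (Set.Ioo 0 T)) ({r | t < fu r} ∩ {r | s < fv r}) := by
    rw [← double_layercake (volume.restrict (Set.Ioo 0 T)) fu fv hfum hfvm hfu0 hfv0]
    refine setLIntegral_congr_fun measurableSet_Ioo (fun r hr => ?_)
    have : fu r = decRe E u r := by rw [hfu]; simp [hr.1]
    have h2 : fv r = decRe E v r := by rw [hfv]; simp [hr.1]
    rw [this, h2, ENNReal.ofReal_mul (decRe_nonneg E u r)]
  rw [hL, hR]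
  refine lintegral_mono_ae ?_
  filter_upwards [ae_restrict_mem measurableSet_Ioi] with t ht
  refine lintegral_mono_ae ?_
  filter_upwards [ae_restrict_mem measurableSet_Ioi] with s hs
  rw [Set.mem_Ioi] at ht hs
  have hABm : MeasurableSet ({x | t < |u x|} ∩ {x | s < |v x|}) :=
    (measurableSet_lt measurable_const hu.abs).inter
      (measurableSet_lt measurable_const hv.abs)
  rw [Measure.restrict_apply hABm, Measure.restrict_apply' measurableSet_Ioo]
  have hmuE : volume {x ∈ E | t < |u x|} ≠ ⊤ :=
    (lt_of_le_of_lt (measure_mono fun x hx => hx.1) hEfin).ne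
  have hmvE : volume {x ∈ E | s < |v x|} ≠ ⊤ :=
    (lt_of_le_of_lt (measure_mono fun x hx => hx.1) hEfin).ne
  set a := (volume {x ∈ E | t < |u x|}).toReal with ha
  set b := (volume {x ∈ E | s < |v x|}).toReal with hb
  have haT : a ≤ T := ENNReal.toReal_mono hEfin.ne (measure_mono fun x hx => hx.1)
  have hsetEq : ({r | t < fu r} ∩ {r | s < fv r}) ∩ Set.Ioo 0 T
      = Set.Ioo 0 (min a b) := by
    ext r
    simp only [Set.mem_inter_iff, Set.mem_setOf_eq, Set.mem_Ioo, lt_min_iff]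
    constructor
    · rintro ⟨⟨h1, h2⟩, hr0, hrT⟩
      have hfur : fu r = decRe E u r := by rw [hfu]; simp [hr0]
      have hfvr : fv r = decRe E v r := by rw [hfv]; simp [hr0]
      rw [hfur] at h1
      rw [hfvr] at h2
      exact ⟨hr0,
        (ENNReal.ofReal_lt_iff_lt_toReal hr0.le hmuE).1
          ((decRe_lt_iff hE hEfin hu hr0 ht).1 h1),
        (ENNReal.ofReal_lt_iff_lt_toReal hr0.le hmvE).1
          ((decRe_lt_iff hE hEfin hv hr0 hs).1 h2)⟩
    · rintro ⟨hr0, hra, hrb⟩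
      have hrT : r < T := lt_of_lt_of_le hra haT
      have hfur : fu r = decRe E u r := by rw [hfu]; simp [hr0]
      have hfvr : fv r = decRe E v r := by rw [hfv]; simp [hr0]
      refine ⟨⟨?_, ?_⟩, hr0, hrT⟩
      · rw [hfur]
        exact (decRe_lt_iff hE hEfin hu hr0 ht).2
          ((ENNReal.ofReal_lt_iff_lt_toReal hr0.le hmuE).2 hra)
      · rw [hfvr]
        exact (decRe_lt_iff hE hEfin hv hr0 hs).2
          ((ENNReal.ofReal_lt_iff_lt_toReal hr0.le hmvE).2 hrb)
  rw [hsetEq, Real.volume_Ioo, sub_zero]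
  have hmono : Monotone ENNReal.ofReal := fun x y h => ENNReal.ofReal_le_ofReal h
  rw [hmono.map_min, ha, hb, ENNReal.ofReal_toReal hmuE, ENNReal.ofReal_toReal hmvE]
  exact le_min (measure_mono fun x hx => ⟨hx.2, hx.1.1⟩)
    (measure_mono fun x hx => ⟨hx.2, hx.1.2⟩)
end

section
/- Let ℓ(s) = 1 + |log s| and ℓℓ(s) = 1 + log ℓ(s). For q ∈ [1,∞], α > 1/q', β ∈ ℝ, one has ‖s^{-1/q'} ℓ(s)^{-α} ℓℓ(s)^{-β}‖_{L^{q'}(0,r)} ≈ ℓ(r)^{1/q' - α} ℓℓ(r)^{-β} near 0, with constants independent of r. -/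
open MeasureTheory Set
open scoped ENNReal

noncomputable def ell (s : ℝ) : ℝ := 1 + |Real.log s|
noncomputable def ellell (s : ℝ) : ℝ := 1 + Real.log (ell s)

lemma one_le_ell (s : ℝ) : 1 ≤ ell s := by
  simp [ell, abs_nonneg]

lemma ell_pos (s : ℝ) : 0 < ell s := lt_of_lt_of_le one_pos (one_le_ell s)

lemma one_le_ellell (s : ℝ) : 1 ≤ ellell s := by
  have := Real.log_nonneg (one_le_ell s)
  simp [ellell]; linarith

lemma ellell_pos (s : ℝ) : 0 < ellell s := lt_of_lt_of_le one_pos (one_le_ellell s)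

lemma ell_eq {s : ℝ} (h0 : 0 < s) (h1 : s ≤ 1) : ell s = 1 - Real.log s := by
  have : Real.log s ≤ 0 := Real.log_nonpos (le_of_lt h0) h1
  rw [ell, abs_of_nonpos this]; ring

lemma ell_anti {s t : ℝ} (h0 : 0 < s) (hst : s ≤ t) (h1 : t ≤ 1) : ell t ≤ ell s := by
  rw [ell_eq h0 (hst.trans h1), ell_eq (h0.trans_le hst) h1]
  have := Real.log_le_log h0 hst
  linarith

lemma ellell_anti {s t : ℝ} (h0 : 0 < s) (hst : s ≤ t) (h1 : t ≤ 1) : ellell t ≤ ellell s := by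
  have := Real.log_le_log (ell_pos t) (ell_anti h0 hst h1)
  simp [ellell]; linarith

/-- min of `x ^ (-c)` on `[M, 2M]` comparison. -/
lemma pow_lower (c : ℝ) {M x : ℝ} (hM : 1 ≤ M) (h1 : M ≤ x) (h2 : x ≤ 2 * M) :
    2 ^ (-|c|) * M ^ (-c) ≤ x ^ (-c) := by
  have hM0 : (0:ℝ) < M := lt_of_lt_of_le one_pos hM
  have hx0 : (0:ℝ) < x := hM0.trans_le h1
  rcases le_or_gt 0 c with hc | hc
  · rw [abs_of_nonneg hc, ← Real.mul_rpow (by norm_num) hM0.le]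
    exact Real.rpow_le_rpow_of_nonpos hx0 h2 (by linarith)
  · rw [abs_of_neg hc, neg_neg]
    calc (2:ℝ) ^ c * M ^ (-c) ≤ 1 * M ^ (-c) := by
          apply mul_le_mul_of_nonneg_right _ (Real.rpow_nonneg hM0.le _)
          exact Real.rpow_le_one_of_one_le_of_nonpos (by norm_num) hc.le
      _ ≤ x ^ (-c) := by
          rw [one_mul]; exact Real.rpow_le_rpow hM0.le h1 (by linarith)

lemma log_growth {δ : ℝ} (hδ : 0 < δ) {x : ℝ} (hx : 1 ≤ x) :
    1 + Real.log x ≤ (1 + 1/δ) * x ^ δ := by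
  have hx0 : (0:ℝ) < x := lt_of_lt_of_le one_pos hx
  have h1 : (1:ℝ) ≤ x ^ δ := Real.one_le_rpow hx hδ.le
  have h2 : Real.log (x ^ δ) ≤ x ^ δ - 1 := Real.log_le_sub_one_of_pos (by positivity)
  rw [Real.log_rpow hx0] at h2
  have : Real.log x ≤ (x ^ δ - 1) / δ := by
    rw [le_div_iff₀ hδ]; linarith [mul_comm δ (Real.log x)]
  have h3 : (x ^ δ - 1)/δ = x ^ δ * (1/δ) - 1 * (1/δ) := by ring
  have h4 : (1 + 1/δ) * x ^ δ = x ^ δ + x ^ δ * (1/δ) := by ring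
  have h5 : (0:ℝ) < 1/δ := by positivity
  rw [h4]; rw [h3] at this
  linarith

lemma pow_upper (b : ℝ) {ε : ℝ} (hε : 0 < ε) :
    ∃ K : ℝ, 0 < K ∧ ∀ L t : ℝ, 1 ≤ L → L ≤ t →
      (1 + Real.log t) ^ (-b) ≤ K * ((t/L) ^ ε * (1 + Real.log L) ^ (-b)) := by
  rcases le_or_gt 0 b with hb | hb
  · refine ⟨1, one_pos, fun L t hL hLt => ?_⟩
    have hL0 : (0:ℝ) < 1 + Real.log L := by
      have := Real.log_nonneg hL; linarith
    have ht0 : 1 + Real.log L ≤ 1 + Real.log t := by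
      have := Real.log_le_log (lt_of_lt_of_le one_pos hL) hLt; linarith
    have h1 : (1 + Real.log t) ^ (-b) ≤ (1 + Real.log L) ^ (-b) :=
      Real.rpow_le_rpow_of_nonpos hL0 ht0 (by linarith)
    have h2 : (1:ℝ) ≤ (t/L) ^ ε := by
      apply Real.one_le_rpow _ hε.le
      rw [le_div_iff₀ (lt_of_lt_of_le one_pos hL)]; linarith
    nlinarith [Real.rpow_nonneg hL0.le (-b)]
  · set δ : ℝ := ε / (-b) with hδdef
    have hδ : 0 < δ := div_pos hε (by linarith)
    refine ⟨(1 + 1/δ) ^ (-b), Real.rpow_pos_of_pos (by positivity) _, fun L t hL hLt => ?_⟩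
    have hL0 : (0:ℝ) < L := lt_of_lt_of_le one_pos hL
    have ht0 : (0:ℝ) < t := hL0.trans_le hLt
    have hq1 : (1:ℝ) ≤ t / L := by rw [le_div_iff₀ hL0]; linarith
    have hlogL : 0 ≤ Real.log L := Real.log_nonneg hL
    have hlogq : 0 ≤ Real.log (t/L) := Real.log_nonneg hq1
    have hsplit : Real.log t = Real.log L + Real.log (t/L) := by
      rw [Real.log_div (ne_of_gt ht0) (ne_of_gt hL0)]; ring
    have key : 1 + Real.log t ≤ (1 + Real.log L) * ((1 + 1/δ) * (t/L) ^ δ) := by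
      have h7 : 1 + Real.log (t/L) ≤ (1 + 1/δ) * (t/L) ^ δ := log_growth hδ hq1
      have h8 : 1 + Real.log t ≤ (1 + Real.log L) * (1 + Real.log (t/L)) := by
        nlinarith
      refine h8.trans ?_
      apply mul_le_mul_of_nonneg_left h7 (by linarith)
    have hA : (0:ℝ) < 1 + Real.log t := by
      have := Real.log_le_log hL0 hLt; nlinarith
    have := Real.rpow_le_rpow hA.le key (by linarith : (0:ℝ) ≤ -b)
    refine this.trans (le_of_eq ?_)
    rw [Real.mul_rpow (by nlinarith) (by positivity), Real.mul_rpow (by positivity) (by positivity),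
      ← Real.rpow_mul (by positivity : (0:ℝ) ≤ t/L)]
    have : δ * (-b) = ε := by
      rw [hδdef]; exact div_mul_cancel₀ ε (ne_of_gt (neg_pos.mpr hb))
    rw [this]; ring

lemma ell_contAt {s : ℝ} (h0 : s ≠ 0) : ContinuousAt ell s := by
  exact continuousAt_const.add (Real.continuousAt_log h0).abs

lemma hasDeriv_ell_pow {ε : ℝ} (hε : 0 < ε) {s : ℝ} (h0 : 0 < s) (h1 : s < 1) :
    HasDerivAt (fun t => ell t ^ (-ε) / ε) (s⁻¹ * ell s ^ (-ε - 1)) s := by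
  have hlog : HasDerivAt (fun t : ℝ => 1 - Real.log t) (-s⁻¹) s :=
    (Real.hasDerivAt_log (ne_of_gt h0)).const_sub 1
  have hbase : (0:ℝ) < 1 - Real.log s := by
    have : Real.log s ≤ 0 := Real.log_nonpos h0.le h1.le
    linarith
  have h2 : HasDerivAt (fun t : ℝ => (1 - Real.log t) ^ (-ε))
      ((-s⁻¹) * (-ε) * (1 - Real.log s) ^ (-ε - 1)) s :=
    hlog.rpow_const (Or.inl (ne_of_gt hbase))
  have h3 := h2.div_const ε
  have heq : (fun t => ell t ^ (-ε) / ε) =ᶠ[nhds s] (fun t : ℝ => (1 - Real.log t) ^ (-ε) / ε) := by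
    filter_upwards [isOpen_Ioo.mem_nhds (show s ∈ Ioo (0:ℝ) 1 from ⟨h0, h1⟩)] with t ht
    rw [ell_eq ht.1 ht.2.le]
  have h4 := h3.congr_of_eventuallyEq heq
  refine h4.congr_deriv ?_
  rw [ell_eq h0 h1.le]
  field_simp

lemma cont_integrand {ε : ℝ} {δ r : ℝ} (h0 : 0 < δ) :
    ContinuousOn (fun s : ℝ => s⁻¹ * ell s ^ (-ε - 1)) (Icc δ r) := by
  intro s hs
  have hs0 : 0 < s := lt_of_lt_of_le h0 hs.1
  apply ContinuousAt.continuousWithinAt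
  exact (continuousAt_inv₀ (ne_of_gt hs0)).mul
    ((ell_contAt (ne_of_gt hs0)).rpow_const (Or.inl (ne_of_gt (ell_pos s))))

lemma cont_int {ε : ℝ} (hε : 0 < ε) {δ r : ℝ} (h0 : 0 < δ) (hδr : δ ≤ r) (hr : r < 1) :
    IntegrableOn (fun s : ℝ => s⁻¹ * ell s ^ (-ε - 1)) (Ioo δ r) volume ∧
      ∫ s in Ioo δ r, s⁻¹ * ell s ^ (-ε - 1) ≤ ell r ^ (-ε) / ε := by
  have hint : IntegrableOn (fun s : ℝ => s⁻¹ * ell s ^ (-ε - 1)) (Icc δ r) volume :=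
    (cont_integrand h0).integrableOn_Icc
  constructor
  · exact hint.mono_set Ioo_subset_Icc_self
  · have h1 : ∫ s in Ioo δ r, s⁻¹ * ell s ^ (-ε - 1)
        = ∫ s in δ..r, s⁻¹ * ell s ^ (-ε - 1) := by
      rw [intervalIntegral.integral_of_le hδr, integral_Ioc_eq_integral_Ioo]
    have h2 : ∫ s in δ..r, s⁻¹ * ell s ^ (-ε - 1)
        = ell r ^ (-ε) / ε - ell δ ^ (-ε) / ε := by
      apply intervalIntegral.integral_eq_sub_of_hasDerivAt
      · intro x hx
        rw [uIcc_of_le hδr] at hx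
        exact hasDeriv_ell_pow hε (lt_of_lt_of_le h0 hx.1) (lt_of_le_of_lt hx.2 hr)
      · apply ContinuousOn.intervalIntegrable
        rw [uIcc_of_le hδr]
        exact cont_integrand h0
    rw [h1, h2]
    have : 0 ≤ ell δ ^ (-ε) / ε := div_nonneg (Real.rpow_nonneg (ell_pos δ).le _) hε.le
    linarith

lemma upper_master (a b : ℝ) (ha : 1 < a) :
    ∃ C : ℝ, 0 < C ∧ ∀ r ∈ Ioo (0:ℝ) (Real.exp (-1)),
      ∫⁻ s in Ioo (0:ℝ) r, ENNReal.ofReal (s⁻¹ * ell s ^ (-a) * ellell s ^ (-b)) ≤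
        ENNReal.ofReal (C * (ell r ^ (1-a) * ellell r ^ (-b))) := by
  set ε : ℝ := (a-1)/2 with hεdef
  have hε : 0 < ε := by rw [hεdef]; linarith
  obtain ⟨K, hK, hKle⟩ := pow_upper b hε
  refine ⟨K / ε, by positivity, fun r hr => ?_⟩
  obtain ⟨hr0, hre⟩ := hr
  have hr1 : r < 1 := lt_trans hre (by rw [Real.exp_lt_one_iff]; norm_num)
  set D : ℝ := K * ell r ^ (-ε) * ellell r ^ (-b) with hDdef
  have hD0 : 0 ≤ D := by
    apply mul_nonneg (mul_nonneg hK.le (Real.rpow_nonneg (ell_pos r).le _))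
      (Real.rpow_nonneg (ellell_pos r).le _)
  -- pointwise bound on (0, r)
  have hpt : ∀ s ∈ Ioo (0:ℝ) r,
      s⁻¹ * ell s ^ (-a) * ellell s ^ (-b) ≤ D * (s⁻¹ * ell s ^ (-ε - 1)) := by
    intro s hs
    have hs0 : 0 < s := hs.1
    have hsr : s < r := hs.2
    have hLr : 1 ≤ ell r := one_le_ell r
    have hLsr : ell r ≤ ell s := ell_anti hs0 hsr.le hr1.le
    have key := hKle (ell r) (ell s) hLr hLsr
    -- key : ellell s ^ (-b) ≤ K * ((ell s / ell r) ^ ε * ellell r ^ (-b))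
    have hsplit : (ell s / ell r) ^ ε = ell s ^ ε * ell r ^ (-ε) := by
      rw [Real.div_rpow (ell_pos s).le (ell_pos r).le, Real.rpow_neg (ell_pos r).le, div_eq_mul_inv]
    have hmerge : ell s ^ (-a) * ell s ^ ε = ell s ^ (-ε - 1) := by
      rw [← Real.rpow_add (ell_pos s)]
      congr 1
      rw [hεdef]; ring
    have hnn : 0 ≤ s⁻¹ * ell s ^ (-a) := by
      apply mul_nonneg (inv_nonneg.mpr hs0.le) (Real.rpow_nonneg (ell_pos s).le _)
    calc s⁻¹ * ell s ^ (-a) * ellell s ^ (-b)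
        ≤ s⁻¹ * ell s ^ (-a) * (K * ((ell s / ell r) ^ ε * ellell r ^ (-b))) := by
          exact mul_le_mul_of_nonneg_left key hnn
      _ = D * (s⁻¹ * ell s ^ (-ε - 1)) := by
          rw [hsplit, hDdef, ← hmerge]; ring
  -- cover (0,r) by Ioo (r/(n+2)) r
  have hcover : Ioo (0:ℝ) r = ⋃ n : ℕ, Ioo (r / (n+2)) r := by
    ext s
    simp only [mem_Ioo, mem_iUnion]
    constructor
    · rintro ⟨hs0, hsr⟩
      obtain ⟨n, hn⟩ := exists_nat_gt (r / s)
      refine ⟨n, ⟨?_, hsr⟩⟩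
      rw [div_lt_iff₀ (by positivity)]
      rw [div_lt_iff₀ hs0] at hn
      nlinarith
    · rintro ⟨n, hn1, hn2⟩
      exact ⟨lt_trans (by positivity) hn1, hn2⟩
  have hdir : Directed (fun x1 x2 : Set ℝ => x1 ⊆ x2) (fun n : ℕ => Ioo (r / (n+2)) r) := by
    intro i j
    refine ⟨max i j, Ioo_subset_Ioo ?_ le_rfl, Ioo_subset_Ioo ?_ le_rfl⟩ <;>
      · apply div_le_div_of_nonneg_left hr0.le (by positivity)
        push_cast
        simp [le_max_iff, le_refl]
  rw [hcover, setLIntegral_iUnion_of_directed _ hdir]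
  apply iSup_le
  intro n
  set δ : ℝ := r / (n+2) with hδdef
  have hδ0 : 0 < δ := by positivity
  have hδr : δ ≤ r := by
    rw [hδdef, div_le_iff₀ (by positivity)]
    nlinarith [hr0]
  obtain ⟨hint, hval⟩ := cont_int hε hδ0 hδr hr1
  calc ∫⁻ s in Ioo δ r, ENNReal.ofReal (s⁻¹ * ell s ^ (-a) * ellell s ^ (-b))
      ≤ ∫⁻ s in Ioo δ r, ENNReal.ofReal (D * (s⁻¹ * ell s ^ (-ε - 1))) := by
        apply setLIntegral_mono' measurableSet_Ioo
        intro s hs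
        apply ENNReal.ofReal_le_ofReal
        exact hpt s ⟨lt_of_lt_of_le hδ0 hs.1.le, hs.2⟩
    _ = ENNReal.ofReal (∫ s in Ioo δ r, D * (s⁻¹ * ell s ^ (-ε - 1))) := by
        rw [ofReal_integral_eq_lintegral_ofReal (hint.const_mul D)]
        filter_upwards [ae_restrict_mem measurableSet_Ioo] with s hs
        have hs0 : 0 < s := lt_of_lt_of_le hδ0 hs.1.le
        apply mul_nonneg hD0
        exact mul_nonneg (inv_nonneg.mpr hs0.le) (Real.rpow_nonneg (ell_pos s).le _)
    _ ≤ ENNReal.ofReal (K / ε * (ell r ^ (1-a) * ellell r ^ (-b))) := by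
        apply ENNReal.ofReal_le_ofReal
        rw [integral_const_mul]
        calc D * ∫ s in Ioo δ r, s⁻¹ * ell s ^ (-ε - 1)
            ≤ D * (ell r ^ (-ε) / ε) := mul_le_mul_of_nonneg_left hval hD0
          _ = K / ε * (ell r ^ (1-a) * ellell r ^ (-b)) := by
              rw [hDdef]
              have : ell r ^ (-ε) * ell r ^ (-ε) = ell r ^ (1-a) := by
                rw [← Real.rpow_add (ell_pos r)]
                congr 1
                rw [hεdef]; ring
              rw [← this]; ring

lemma ell_sq_le {r : ℝ} (hr0 : 0 < r) (hr1 : r < 1) : ell (r * r) ≤ 2 * ell r := by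
  rw [ell_eq (by positivity) (by nlinarith), ell_eq hr0 hr1.le,
    Real.log_mul (ne_of_gt hr0) (ne_of_gt hr0)]
  have : Real.log r ≤ 0 := Real.log_nonpos hr0.le hr1.le
  linarith

lemma ellell_le_two {s r : ℝ} (hs : ell s ≤ 2 * ell r) : ellell s ≤ 2 * ellell r := by
  have h1 : Real.log (ell s) ≤ Real.log (2 * ell r) := Real.log_le_log (ell_pos s) hs
  rw [Real.log_mul (by norm_num) (ne_of_gt (ell_pos r))] at h1
  have h2 : Real.log 2 ≤ 1 := by
    have := Real.log_le_sub_one_of_pos (by norm_num : (0:ℝ) < 2); linarith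
  have h3 : 0 ≤ Real.log (ell r) := Real.log_nonneg (one_le_ell r)
  simp only [ellell]
  linarith

lemma lower_master (a b : ℝ) :
    ∃ c : ℝ, 0 < c ∧ ∀ r ∈ Ioo (0:ℝ) (Real.exp (-1)),
      ENNReal.ofReal (c * (ell r ^ (1-a) * ellell r ^ (-b))) ≤
        ∫⁻ s in Ioo (0:ℝ) r, ENNReal.ofReal (s⁻¹ * ell s ^ (-a) * ellell s ^ (-b)) := by
  refine ⟨2 ^ (-|a|) * 2 ^ (-|b|) / 2, by positivity, fun r hr => ?_⟩
  obtain ⟨hr0, hre⟩ := hr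
  have hr1 : r < 1 := lt_trans hre (by rw [Real.exp_lt_one_iff]; norm_num)
  have hrr : r * r < r := by nlinarith
  have hrr0 : 0 < r * r := by positivity
  set m : ℝ := 2 ^ (-|a|) * 2 ^ (-|b|) * (ell r ^ (-a) * ellell r ^ (-b)) with hmdef
  have hm0 : 0 ≤ m := by
    apply mul_nonneg (by positivity)
    exact mul_nonneg (Real.rpow_nonneg (ell_pos r).le _) (Real.rpow_nonneg (ellell_pos r).le _)
  have hpt : ∀ s ∈ Ioo (r*r) r, m * s⁻¹ ≤ s⁻¹ * ell s ^ (-a) * ellell s ^ (-b) := by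
    intro s hs
    have hs0 : 0 < s := lt_trans hrr0 hs.1
    have h1 : ell r ≤ ell s := ell_anti hs0 hs.2.le hr1.le
    have h2 : ell s ≤ 2 * ell r :=
      le_trans (ell_anti hrr0 hs.1.le (le_of_lt (lt_trans hs.2 hr1))) (ell_sq_le hr0 hr1)
    have h3 : ellell r ≤ ellell s := ellell_anti hs0 hs.2.le hr1.le
    have h4 : ellell s ≤ 2 * ellell r := ellell_le_two h2
    have hA := pow_lower a (one_le_ell r) h1 h2
    have hB := pow_lower b (one_le_ellell r) h3 h4
    have hApos : 0 ≤ 2 ^ (-|a|) * ell r ^ (-a) := by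
      apply mul_nonneg (by positivity) (Real.rpow_nonneg (ell_pos r).le _)
    have := mul_le_mul hA hB (by
      apply mul_nonneg (by positivity) (Real.rpow_nonneg (ellell_pos r).le _)) (Real.rpow_nonneg (ell_pos s).le _)
    calc m * s⁻¹ = (2 ^ (-|a|) * ell r ^ (-a) * (2 ^ (-|b|) * ellell r ^ (-b))) * s⁻¹ := by
          rw [hmdef]; ring
      _ ≤ (ell s ^ (-a) * ellell s ^ (-b)) * s⁻¹ := by
          apply mul_le_mul_of_nonneg_right this (inv_nonneg.mpr hs0.le)
      _ = s⁻¹ * ell s ^ (-a) * ellell s ^ (-b) := by ring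
  have hint : IntegrableOn (fun s : ℝ => m * s⁻¹) (Ioo (r*r) r) volume := by
    apply Integrable.const_mul
    apply IntegrableOn.mono_set _ Ioo_subset_Icc_self
    apply ContinuousOn.integrableOn_Icc
    intro s hs
    exact (continuousAt_inv₀ (ne_of_gt (lt_of_lt_of_le hrr0 hs.1))).continuousWithinAt
  have hintval : ∫ s in Ioo (r*r) r, s⁻¹ = - Real.log r := by
    rw [← integral_Ioc_eq_integral_Ioo, ← intervalIntegral.integral_of_le hrr.le,
      integral_inv_of_pos hrr0 hr0]
    rw [div_eq_mul_inv, Real.log_mul (ne_of_gt hr0) (by positivity),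
      Real.log_inv, Real.log_mul (ne_of_gt hr0) (ne_of_gt hr0)]
    ring
  calc ENNReal.ofReal (2 ^ (-|a|) * 2 ^ (-|b|) / 2 * (ell r ^ (1-a) * ellell r ^ (-b)))
      ≤ ENNReal.ofReal (∫ s in Ioo (r*r) r, m * s⁻¹) := by
        apply ENNReal.ofReal_le_ofReal
        rw [integral_const_mul, hintval]
        have hlogr : Real.log r < -1 := by
          have := Real.log_lt_log hr0 hre
          rwa [Real.log_exp] at this
        have hellr : ell r = 1 - Real.log r := ell_eq hr0 hr1.le
        have hhalf : ell r / 2 ≤ - Real.log r := by rw [hellr]; linarith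
        calc 2 ^ (-|a|) * 2 ^ (-|b|) / 2 * (ell r ^ (1-a) * ellell r ^ (-b))
            = m * (ell r / 2) := by
              rw [hmdef]
              have : ell r ^ (1-a) = ell r ^ (-a) * ell r := by
                rw [show (1:ℝ)-a = -a + 1 by ring, Real.rpow_add (ell_pos r), Real.rpow_one]
              rw [this]; ring
          _ ≤ m * (- Real.log r) := mul_le_mul_of_nonneg_left hhalf hm0
    _ = ∫⁻ s in Ioo (r*r) r, ENNReal.ofReal (m * s⁻¹) := by
        apply ofReal_integral_eq_lintegral_ofReal hint
        filter_upwards [ae_restrict_mem measurableSet_Ioo] with s hs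
        exact mul_nonneg hm0 (inv_nonneg.mpr (le_of_lt (lt_trans hrr0 hs.1)))
    _ ≤ ∫⁻ s in Ioo (r*r) r, ENNReal.ofReal (s⁻¹ * ell s ^ (-a) * ellell s ^ (-b)) := by
        apply setLIntegral_mono' measurableSet_Ioo
        intro s hs
        exact ENNReal.ofReal_le_ofReal (hpt s hs)
    _ ≤ ∫⁻ s in Ioo (0:ℝ) r, ENNReal.ofReal (s⁻¹ * ell s ^ (-a) * ellell s ^ (-b)) := by
        apply lintegral_mono_set
        apply Ioo_subset_Ioo hrr0.le le_rfl


/-- For `α > 1/q'`: `‖s^{-1/q'} ℓ(s)^{-α} ℓℓ(s)^{-β}‖_{L^{q'}(0,r)} ≈ ℓ(r)^{1/q'-α} ℓℓ(r)^{-β}`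
near `0`, with constants independent of `r`. -/
theorem stmt8 (q q' : ℝ≥0∞) (hq : 1 ≤ q) (hconj : 1 / q + 1 / q' = 1)
    (α β : ℝ) (hα : (1 / q').toReal < α) :
    ∃ c C r₀ : ℝ, 0 < c ∧ 0 < C ∧ 0 < r₀ ∧
      ∀ r ∈ Set.Ioo (0 : ℝ) r₀,
        ENNReal.ofReal (c * (ell r ^ ((1 / q').toReal - α) * ellell r ^ (-β))) ≤
            eLpNorm (fun s : ℝ => s ^ (-(1 / q').toReal) * ell s ^ (-α) * ellell s ^ (-β))
              q' (volume.restrict (Set.Ioo (0 : ℝ) r)) ∧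
          eLpNorm (fun s : ℝ => s ^ (-(1 / q').toReal) * ell s ^ (-α) * ellell s ^ (-β))
              q' (volume.restrict (Set.Ioo (0 : ℝ) r)) ≤
            ENNReal.ofReal (C * (ell r ^ ((1 / q').toReal - α) * ellell r ^ (-β))) := by
  have h1q' : 1 ≤ q' := by
    have h2 : 1/q' ≤ 1 := by
      calc 1/q' ≤ 1/q + 1/q' := le_add_self
        _ = 1 := hconj
    rwa [one_div, ENNReal.inv_le_one] at h2
  have hq'0 : q' ≠ 0 := by
    intro h; rw [h] at h1q'; simp at h1q'
  rcases eq_or_ne q' ∞ with hq'top | hq'top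
  · -- q' = ∞ case
    subst hq'top
    have hθ : ((1:ℝ≥0∞) / ⊤).toReal = 0 := by simp
    rw [hθ] at hα ⊢
    have hα0 : 0 < α := hα
    set ε : ℝ := α / 2 with hεdef
    have hε : 0 < ε := by positivity
    obtain ⟨K, hK, hKle⟩ := pow_upper β hε
    refine ⟨2 ^ (-|α|) * 2 ^ (-|β|), K, Real.exp (-1), by positivity, hK, Real.exp_pos _,
      fun r hr => ?_⟩
    obtain ⟨hr0, hre⟩ := hr
    have hr1 : r < 1 := lt_trans hre (by rw [Real.exp_lt_one_iff]; norm_num)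
    simp only [neg_zero, Real.rpow_zero, one_mul, zero_sub]
    rw [eLpNorm_exponent_top]
    set f : ℝ → ℝ := fun s => ell s ^ (-α) * ellell s ^ (-β) with hfdef
    constructor
    · -- lower bound
      set m : ℝ := 2 ^ (-|α|) * 2 ^ (-|β|) * (ell r ^ (-α) * ellell r ^ (-β)) with hmdef
      have hpt : ∀ s ∈ Ioo (r*r) r, m ≤ f s := by
        intro s hs
        have hrr0 : 0 < r * r := by positivity
        have hs0 : 0 < s := lt_trans hrr0 hs.1
        have h1 : ell r ≤ ell s := ell_anti hs0 hs.2.le hr1.le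
        have h2 : ell s ≤ 2 * ell r :=
          le_trans (ell_anti hrr0 hs.1.le (le_of_lt (lt_trans hs.2 hr1))) (ell_sq_le hr0 hr1)
        have h3 : ellell r ≤ ellell s := ellell_anti hs0 hs.2.le hr1.le
        have h4 : ellell s ≤ 2 * ellell r := ellell_le_two h2
        have hA := pow_lower α (one_le_ell r) h1 h2
        have hB := pow_lower β (one_le_ellell r) h3 h4
        calc m = (2 ^ (-|α|) * ell r ^ (-α)) * (2 ^ (-|β|) * ellell r ^ (-β)) := by
              rw [hmdef]; ring
          _ ≤ ell s ^ (-α) * ellell s ^ (-β) := by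
              apply mul_le_mul hA hB
              · apply mul_nonneg (by positivity) (Real.rpow_nonneg (ellell_pos r).le _)
              · exact Real.rpow_nonneg (ell_pos s).le _
      by_contra hcon
      push_neg at hcon
      have hmono : eLpNormEssSup f (volume.restrict (Ioo (r*r) r)) ≤
          eLpNormEssSup f (volume.restrict (Ioo (0:ℝ) r)) := by
        rw [← eLpNorm_exponent_top, ← eLpNorm_exponent_top]
        exact eLpNorm_mono_measure f
          (Measure.restrict_mono (Ioo_subset_Ioo (by positivity) le_rfl) le_rfl)
      have hlt : eLpNormEssSup f (volume.restrict (Ioo (r*r) r)) <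
          ENNReal.ofReal (2 ^ (-|α|) * 2 ^ (-|β|) * (ell r ^ (-α) * ellell r ^ (-β))) :=
        lt_of_le_of_lt hmono hcon
      have hae : ∀ᵐ s ∂(volume.restrict (Ioo (r*r) r)), (‖f s‖₊ : ℝ≥0∞) <
          ENNReal.ofReal (2 ^ (-|α|) * 2 ^ (-|β|) * (ell r ^ (-α) * ellell r ^ (-β))) :=
        ae_lt_of_essSup_lt hlt
      have hge : ∀ᵐ s ∂(volume.restrict (Ioo (r*r) r)),
          ENNReal.ofReal (2 ^ (-|α|) * 2 ^ (-|β|) * (ell r ^ (-α) * ellell r ^ (-β)))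
            ≤ (‖f s‖₊ : ℝ≥0∞) := by
        filter_upwards [ae_restrict_mem measurableSet_Ioo] with s hs
        rw [show ((‖f s‖₊ : ℝ≥0∞)) = ENNReal.ofReal ‖f s‖ from (ofReal_norm (f s)).symm]
        apply ENNReal.ofReal_le_ofReal
        calc m ≤ f s := hpt s hs
          _ ≤ ‖f s‖ := le_abs_self _
      have hfalse : ∀ᵐ s ∂(volume.restrict (Ioo (r*r) r)), False := by
        filter_upwards [hae, hge] with s h1 h2
        exact absurd h1 (not_lt.mpr h2)
      rw [Filter.eventually_false_iff_eq_bot, ae_eq_bot] at hfalse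
      have : volume (Ioo (r*r) r) = 0 := by
        rw [← Measure.restrict_apply_univ, hfalse]; simp
      rw [Real.volume_Ioo] at this
      have hrr : r * r < r := by nlinarith
      rw [ENNReal.ofReal_eq_zero] at this
      linarith
    · -- upper bound
      apply eLpNormEssSup_le_of_ae_bound (C := K * (ell r ^ (-α) * ellell r ^ (-β)))
      rw [ae_restrict_iff' measurableSet_Ioo]
      filter_upwards with s hs
      have hs0 : 0 < s := hs.1
      have hLsr : ell r ≤ ell s := ell_anti hs0 hs.2.le hr1.le
      have hfs0 : 0 ≤ f s :=
        mul_nonneg (Real.rpow_nonneg (ell_pos s).le _) (Real.rpow_nonneg (ellell_pos s).le _)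
      rw [Real.norm_of_nonneg hfs0]
      have key := hKle (ell r) (ell s) (one_le_ell r) hLsr
      have hsplit : (ell s / ell r) ^ ε = ell s ^ ε * ell r ^ (-ε) := by
        rw [Real.div_rpow (ell_pos s).le (ell_pos r).le, Real.rpow_neg (ell_pos r).le,
          div_eq_mul_inv]
      have hmerge : ell s ^ (-α) * ell s ^ ε = ell s ^ (ε - α) := by
        rw [← Real.rpow_add (ell_pos s)]; congr 1; ring
      have hdecay : ell s ^ (ε - α) ≤ ell r ^ (ε - α) :=
        Real.rpow_le_rpow_of_nonpos (ell_pos r) hLsr (by rw [hεdef]; linarith)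
      have hmerge2 : ell r ^ (-ε) * ell r ^ (ε - α) = ell r ^ (-α) := by
        rw [← Real.rpow_add (ell_pos r)]; congr 1; ring
      calc f s = ell s ^ (-α) * ellell s ^ (-β) := rfl
        _ ≤ ell s ^ (-α) * (K * ((ell s / ell r) ^ ε * ellell r ^ (-β))) :=
            mul_le_mul_of_nonneg_left key (Real.rpow_nonneg (ell_pos s).le _)
        _ = K * ellell r ^ (-β) * ell r ^ (-ε) * (ell s ^ (-α) * ell s ^ ε) := by
            rw [hsplit]; ring
        _ ≤ K * ellell r ^ (-β) * ell r ^ (-ε) * ell r ^ (ε - α) := by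
            rw [hmerge]
            apply mul_le_mul_of_nonneg_left hdecay
            apply mul_nonneg (mul_nonneg hK.le (Real.rpow_nonneg (ellell_pos r).le _))
              (Real.rpow_nonneg (ell_pos r).le _)
        _ = K * (ell r ^ (-α) * ellell r ^ (-β)) := by
            rw [mul_assoc (K * ellell r ^ (-β)), hmerge2]; ring
  · -- q' finite case
    set p : ℝ := q'.toReal with hpdef
    have hp0 : 0 < p := ENNReal.toReal_pos hq'0 hq'top
    have hθ : ((1:ℝ≥0∞) / q').toReal = 1/p := by
      rw [one_div, ENNReal.toReal_inv, one_div]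
    rw [hθ] at hα ⊢
    have ha1 : 1 < α * p := by
      rw [← div_lt_iff₀ hp0] at *
      · exact hα
    set a : ℝ := α * p with hadef
    set b : ℝ := β * p with hbdef
    obtain ⟨c₀, hc₀, hlow⟩ := lower_master a b
    obtain ⟨C₀, hC₀, hup⟩ := upper_master a b ha1
    refine ⟨c₀ ^ (1/p), C₀ ^ (1/p), Real.exp (-1), Real.rpow_pos_of_pos hc₀ _,
      Real.rpow_pos_of_pos hC₀ _, Real.exp_pos _, fun r hr => ?_⟩
    have key : eLpNorm (fun s : ℝ => s ^ (-(1/p)) * ell s ^ (-α) * ellell s ^ (-β)) q'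
        (volume.restrict (Ioo (0:ℝ) r)) =
        (∫⁻ s in Ioo (0:ℝ) r, ENNReal.ofReal (s⁻¹ * ell s ^ (-a) * ellell s ^ (-b))) ^ (1/p) := by
      rw [eLpNorm_eq_lintegral_rpow_enorm_toReal hq'0 hq'top]
      congr 1
      apply setLIntegral_congr_fun measurableSet_Ioo
      intro s hs
      have hs0 : 0 < s := hs.1
      have hfs0 : 0 ≤ s ^ (-(1/p)) * ell s ^ (-α) * ellell s ^ (-β) :=
        mul_nonneg (mul_nonneg (Real.rpow_nonneg hs0.le _) (Real.rpow_nonneg (ell_pos s).le _))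
          (Real.rpow_nonneg (ellell_pos s).le _)
      beta_reduce
      rw [← ofReal_norm, Real.norm_of_nonneg hfs0,
        ENNReal.ofReal_rpow_of_nonneg hfs0 hp0.le]
      congr 1
      rw [Real.mul_rpow (mul_nonneg (Real.rpow_nonneg hs0.le _) (Real.rpow_nonneg (ell_pos s).le _))
          (Real.rpow_nonneg (ellell_pos s).le _),
        Real.mul_rpow (Real.rpow_nonneg hs0.le _) (Real.rpow_nonneg (ell_pos s).le _),
        ← Real.rpow_mul hs0.le, ← Real.rpow_mul (ell_pos s).le, ← Real.rpow_mul (ellell_pos s).le]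
      rw [show -(1/p) * p = -1 by field_simp, show -α * p = -a by rw [hadef]; ring,
        show -β * p = -b by rw [hbdef]; ring, Real.rpow_neg_one]
    rw [key]
    have hA0 : 0 ≤ ell r ^ (1-a) * ellell r ^ (-b) :=
      mul_nonneg (Real.rpow_nonneg (ell_pos r).le _) (Real.rpow_nonneg (ellell_pos r).le _)
    have hexp1 : (1 - a) * (1/p) = 1/p - α := by
      rw [hadef]; field_simp
    have hexp2 : (-b) * (1/p) = -β := by
      rw [hbdef]; field_simp
    have hcast : ∀ k : ℝ, 0 < k →
        ENNReal.ofReal (k ^ (1/p) * (ell r ^ (1/p - α) * ellell r ^ (-β))) =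
        (ENNReal.ofReal (k * (ell r ^ (1-a) * ellell r ^ (-b)))) ^ (1/p) := by
      intro k hk
      rw [ENNReal.ofReal_rpow_of_nonneg (mul_nonneg hk.le hA0) (by positivity)]
      congr 1
      rw [Real.mul_rpow hk.le hA0,
        Real.mul_rpow (Real.rpow_nonneg (ell_pos r).le _) (Real.rpow_nonneg (ellell_pos r).le _),
        ← Real.rpow_mul (ell_pos r).le, ← Real.rpow_mul (ellell_pos r).le, hexp1, hexp2]
    constructor
    · rw [hcast c₀ hc₀]
      exact ENNReal.rpow_le_rpow (hlow r hr) (by positivity)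
    · rw [hcast C₀ hC₀]
      exact ENNReal.rpow_le_rpow (hup r hr) (by positivity)
end
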